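/- Let d ≥ 1 be an integer, w > 0, and r > 0 with 2r < 3w, and fix x, y ∈ ℝ^d. If an offset v is sampled uniformly from the cube [0, 3w]^d, then the probability that there exists u ∈ v + 3w·ℤ^d with ‖x − u‖₂ ≤ r and ‖y − u‖₂ ≤ r is exactly vol(Ball(x, r) ∩ Ball(y, r)) / (3w)^d, where vol denotes Lebesgue measure on ℝ^d. -/

import Mathlib

open MeasureTheory

/-- The closed Euclidean ball of radius `r` centered at `x` in `ℝ^d`. -/
def euclBall (d : ℕ) (x : Fin d → ℝ) (r : ℝ) : Set (Fin d → ℝ) :=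
  {z | Real.sqrt (∑ i, (z i - x i) ^ 2) ≤ r}

lemma int_eq_zero_of_abs_cast_lt_one {m : ℤ} (h : |(m : ℝ)| < 1) : m = 0 := by
  have h2 : ((|m| : ℤ) : ℝ) < 1 := by rw [Int.cast_abs]; exact h
  have h3 : |m| < 1 := by exact_mod_cast h2
  rw [abs_lt] at h3
  omega

lemma hyperplane_null (d : ℕ) (i : Fin d) (a : ℝ) :
    volume {u : Fin d → ℝ | u i = a} = 0 := by
  have := MeasureTheory.Measure.pi_hyperplane (fun _ : Fin d => (volume : Measure ℝ)) i a
  simpa [MeasureTheory.volume_pi] using this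

lemma key_lattice (d : ℕ) (w : ℝ) (hw : 0 < w) (T : Set (Fin d → ℝ))
    (hTm : MeasurableSet T)
    (hdiam : ∀ u u' : Fin d → ℝ, u ∈ T → u' ∈ T → ∀ i, |u i - u' i| < 3 * w) :
    volume {v : Fin d → ℝ | (∀ i, v i ∈ Set.Icc (0 : ℝ) (3 * w)) ∧
      ∃ k : Fin d → ℤ, (fun i => v i + 3 * w * (k i : ℝ)) ∈ T} = volume T := by
  have h3w : (0 : ℝ) < 3 * w := by linarith
  set A : (Fin d → ℤ) → Set (Fin d → ℝ) :=
    fun k => {v | (∀ i, v i ∈ Set.Icc (0 : ℝ) (3 * w)) ∧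
      (fun i => v i + 3 * w * (k i : ℝ)) ∈ T} with hA
  set B : (Fin d → ℤ) → Set (Fin d → ℝ) :=
    fun k => {u | u ∈ T ∧ ∀ i, u i - 3 * w * (k i : ℝ) ∈ Set.Icc (0 : ℝ) (3 * w)} with hB
  -- the statement set is the union of the `A k`
  have hSA : {v : Fin d → ℝ | (∀ i, v i ∈ Set.Icc (0 : ℝ) (3 * w)) ∧
      ∃ k : Fin d → ℤ, (fun i => v i + 3 * w * (k i : ℝ)) ∈ T} = ⋃ k, A k := by
    ext v
    simp only [Set.mem_setOf_eq, Set.mem_iUnion, hA]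
    exact ⟨fun ⟨h1, k, h2⟩ => ⟨k, h1, h2⟩, fun ⟨k, h1, h2⟩ => ⟨h1, k, h2⟩⟩
  -- measurability
  have hCm : MeasurableSet {v : Fin d → ℝ | ∀ i, v i ∈ Set.Icc (0 : ℝ) (3 * w)} := by
    have : {v : Fin d → ℝ | ∀ i, v i ∈ Set.Icc (0 : ℝ) (3 * w)} =
        Set.univ.pi fun _ => Set.Icc (0 : ℝ) (3 * w) := by
      ext v; simp only [Set.mem_univ_pi, Set.mem_setOf_eq]
    rw [this]
    exact MeasurableSet.univ_pi fun _ => measurableSet_Icc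
  have hgm : ∀ k : Fin d → ℤ, Measurable fun v : Fin d → ℝ => fun i => v i + 3 * w * (k i : ℝ) :=
    fun k => measurable_pi_lambda _ fun i => (measurable_pi_apply i).add_const _
  have hgm' : ∀ k : Fin d → ℤ, Measurable fun u : Fin d → ℝ => fun i => u i - 3 * w * (k i : ℝ) :=
    fun k => measurable_pi_lambda _ fun i => (measurable_pi_apply i).sub_const _
  have hAm : ∀ k, MeasurableSet (A k) := fun k => hCm.inter (hTm.preimage (hgm k))
  have hBm : ∀ k, MeasurableSet (B k) := fun k => hTm.inter (hCm.preimage (hgm' k))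
  -- the `A k` are pairwise disjoint
  have hAdisj : Pairwise (Function.onFun Disjoint A) := by
    intro k j hkj
    rw [Function.onFun, Set.disjoint_left]
    rintro v ⟨_, hvk⟩ ⟨_, hvj⟩
    apply hkj
    funext i
    have h := hdiam _ _ hvk hvj i
    have habs : |((k i : ℝ)) - (j i : ℝ)| < 1 := by
      rw [abs_lt] at h ⊢
      constructor <;> nlinarith [h.1, h.2]
    have : k i - j i = 0 := int_eq_zero_of_abs_cast_lt_one (by push_cast; exact habs)
    omega
  -- each `A k` is a translate of `B k`
  have hABvol : ∀ k, volume (A k) = volume (B k) := by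
    intro k
    have hAB : A k = (fun v : Fin d → ℝ => v + fun i => 3 * w * (k i : ℝ)) ⁻¹' B k := by
      ext v
      simp only [hA, hB, Set.mem_setOf_eq, Set.mem_preimage, Pi.add_apply]
      simp only [Set.mem_Icc]
      constructor
      · rintro ⟨h1, h2⟩
        exact ⟨h2, fun i => ⟨by linarith [(h1 i).1], by linarith [(h1 i).2]⟩⟩
      · rintro ⟨h1, h2⟩
        exact ⟨fun i => ⟨by linarith [(h2 i).1], by linarith [(h2 i).2]⟩, h1⟩
    rw [hAB, measure_preimage_add_right]
  -- the `B k` are a.e. disjoint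
  have hBae : Pairwise (Function.onFun (AEDisjoint volume) B) := by
    intro k j hkj
    obtain ⟨i0, hi0⟩ : ∃ i, k i ≠ j i := by
      by_contra hcon; push_neg at hcon; exact hkj (funext hcon)
    refine measure_mono_null (t := {u : Fin d → ℝ | u i0 = 3 * w * (k i0 : ℝ)} ∪
        {u : Fin d → ℝ | u i0 = 3 * w * (k i0 : ℝ) + 3 * w}) ?_ ?_
    · rintro u ⟨⟨_, hk⟩, ⟨_, hj⟩⟩
      have hk0 := (hk i0).1
      have hk3 := (hk i0).2
      have hj0 := (hj i0).1
      have hj3 := (hj i0).2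
      have hm : k i0 - j i0 = 1 ∨ k i0 - j i0 = -1 := by
        have h1 : |((k i0 : ℝ)) - (j i0 : ℝ)| ≤ 1 := by
          rw [abs_le]; constructor <;> nlinarith
        have h2 : ((|k i0 - j i0| : ℤ) : ℝ) ≤ 1 := by
          rw [Int.cast_abs]; push_cast; exact h1
        have h3 : |k i0 - j i0| ≤ 1 := by exact_mod_cast h2
        rw [abs_le] at h3
        omega
      rcases hm with hm | hm
      · left
        have hc : (k i0 : ℝ) - (j i0 : ℝ) = 1 := by exact_mod_cast congrArg (Int.cast : ℤ → ℝ) hm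
        simp only [Set.mem_setOf_eq]
        nlinarith
      · right
        have hc : (k i0 : ℝ) - (j i0 : ℝ) = -1 := by exact_mod_cast congrArg (Int.cast : ℤ → ℝ) hm
        simp only [Set.mem_setOf_eq]
        nlinarith
    · exact measure_union_null (hyperplane_null d i0 _) (hyperplane_null d i0 _)
  -- the `B k` cover `T`
  have hBT : ⋃ k, B k = T := by
    apply subset_antisymm
    · exact Set.iUnion_subset fun k u hu => hu.1
    · intro u hu
      refine Set.mem_iUnion.2 ⟨fun i => ⌊u i / (3 * w)⌋, hu, fun i => ?_⟩
      have h1 := Int.sub_floor_div_mul_nonneg (u i) h3w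
      have h2 := Int.sub_floor_div_mul_lt (u i) h3w
      constructor
      · nlinarith
      · nlinarith
  calc volume {v : Fin d → ℝ | (∀ i, v i ∈ Set.Icc (0 : ℝ) (3 * w)) ∧
      ∃ k : Fin d → ℤ, (fun i => v i + 3 * w * (k i : ℝ)) ∈ T}
      = volume (⋃ k, A k) := by rw [hSA]
    _ = ∑' k, volume (A k) := measure_iUnion hAdisj hAm
    _ = ∑' k, volume (B k) := tsum_congr hABvol
    _ = volume (⋃ k, B k) := (measure_iUnion₀ hBae fun k => (hBm k).nullMeasurableSet).symm
    _ = volume T := by rw [hBT]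

def ballPairT (d : ℕ) (x y : Fin d → ℝ) (r : ℝ) : Set (Fin d → ℝ) :=
  {u | Real.sqrt (∑ i, (x i - u i) ^ 2) ≤ r ∧ Real.sqrt (∑ i, (y i - u i) ^ 2) ≤ r}

/-- If the offset `v` is sampled uniformly from the cube `[0, 3w]^d`, the probability that some
lattice point `u ∈ v + 3w·ℤ^d` has `‖x − u‖₂ ≤ r` and `‖y − u‖₂ ≤ r` is exactly
`vol(Ball(x,r) ∩ Ball(y,r)) / (3w)^d`. -/
theorem prob_lattice_ball_contains_pair (d : ℕ) (hd : 1 ≤ d) (w r : ℝ) (hw : 0 < w)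
    (hr : 0 < r) (hrw : 2 * r < 3 * w) (x y : Fin d → ℝ) :
    (volume {v : Fin d → ℝ | (∀ i, v i ∈ Set.Icc (0 : ℝ) (3 * w)) ∧
        ∃ k : Fin d → ℤ,
          Real.sqrt (∑ i, (x i - (v i + 3 * w * (k i))) ^ 2) ≤ r ∧
          Real.sqrt (∑ i, (y i - (v i + 3 * w * (k i))) ^ 2) ≤ r}).toReal / (3 * w) ^ d
      = (volume (euclBall d x r ∩ euclBall d y r)).toReal / (3 * w) ^ d := by
  have hTball : euclBall d x r ∩ euclBall d y r = (ballPairT d x y r) := by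
    ext z
    simp only [euclBall, ballPairT, Set.mem_inter_iff, Set.mem_setOf_eq]
    have h1 : ∑ i, (z i - x i) ^ 2 = ∑ i, (x i - z i) ^ 2 :=
      Finset.sum_congr rfl fun i _ => by ring
    have h2 : ∑ i, (z i - y i) ^ 2 = ∑ i, (y i - z i) ^ 2 :=
      Finset.sum_congr rfl fun i _ => by ring
    rw [h1, h2]
  -- coordinatewise bound from membership in a ball
  have key : ∀ (p u : Fin d → ℝ), Real.sqrt (∑ i, (p i - u i) ^ 2) ≤ r →
      ∀ i, (p i - u i) ^ 2 ≤ r ^ 2 := by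
    intro p u h i
    have h0 : (0 : ℝ) ≤ ∑ j, (p j - u j) ^ 2 := Finset.sum_nonneg fun j _ => sq_nonneg _
    have hs : ∑ j, (p j - u j) ^ 2 ≤ r ^ 2 := by
      nlinarith [Real.sq_sqrt h0, Real.sqrt_nonneg (∑ j, (p j - u j) ^ 2)]
    exact le_trans (Finset.single_le_sum (f := fun j => (p j - u j) ^ 2) (fun j _ => sq_nonneg _) (Finset.mem_univ i)) hs
  have hdiam : ∀ u u' : Fin d → ℝ, u ∈ (ballPairT d x y r) → u' ∈ (ballPairT d x y r) → ∀ i, |u i - u' i| < 3 * w := by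
    intro u u' hu hu' i
    have ha := key x u hu.1 i
    have hb := key x u' hu'.1 i
    rw [abs_lt]
    constructor <;> nlinarith [sq_nonneg (x i - u i + (x i - u' i)),
      sq_nonneg (x i - u i - (x i - u' i))]
  have hTm : MeasurableSet (ballPairT d x y r) := by
    have hm1 : Measurable fun u : Fin d → ℝ => Real.sqrt (∑ i, (x i - u i) ^ 2) := by
      apply Real.continuous_sqrt.measurable.comp
      exact Finset.measurable_sum _ fun i _ =>
        ((measurable_const.sub (measurable_pi_apply i)).pow_const 2)
    have hm2 : Measurable fun u : Fin d → ℝ => Real.sqrt (∑ i, (y i - u i) ^ 2) := by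
      apply Real.continuous_sqrt.measurable.comp
      exact Finset.measurable_sum _ fun i _ =>
        ((measurable_const.sub (measurable_pi_apply i)).pow_const 2)
    exact (measurableSet_le hm1 measurable_const).inter (measurableSet_le hm2 measurable_const)
  have hmain := key_lattice d w hw (ballPairT d x y r) hTm hdiam
  rw [hTball]
  rw [← hmain]
  rfl
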